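/- Under the hypotheses of the triple-norm convergence theorem and with the coupling h = ε^{1/(2s−2)}, the discrete solution satisfies the uniform bound ‖u_h − u‖_{H¹(Ω)} ≤ C‖u‖_{H^s(Ω)} and the residual-norm estimate ‖u_h − u‖_{uc} ≤ C ε^{1/2}‖u‖_{H^s(Ω)}. -/

import Mathlib

/-- Boundedness and residual-norm convergence (Corollary 3.7): with the coupling
`h = ε^{1/(2s−2)}`, the triple-norm estimate `|||(e_h,λ_h)||| ≤ C(h^{s−1}+ε^{1/2})Ms`
(with `Ms = ‖u‖_{H^s}`), the controls `ε^{1/2}‖v‖_{H¹} ≤ |||(v,w)|||` and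
`‖v‖_{uc} ≤ C_{uc}|||(v,w)|||`, and the optimal interpolation bounds yield
`‖u_h − u‖_{H¹(Ω)} ≤ C'‖u‖_{H^s}` and `‖u_h − u‖_{uc} ≤ C' ε^{1/2}‖u‖_{H^s}`. -/
theorem stmt8 {X : Type*} [AddCommGroup X] [Module ℝ X]
    (trinorm : X → X → ℝ) (nH1 nuc : X → ℝ)
    (ε h s C Cuc Cπ Ms : ℝ)
    (hε : ε ∈ Set.Ioo (0:ℝ) 1) (hs : 1 < s)
    (hC : 0 < C) (hCuc : 0 < Cuc) (hCπ : 0 < Cπ) (hMs : 0 ≤ Ms)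
    (hcoupling : h = ε ^ (1 / (2 * s - 2)))
    (u πu uh lamh : X)
    (hT : trinorm (uh - πu) lamh ≤ C * (h ^ (s - 1) + Real.sqrt ε) * Ms)
    (hc1 : ∀ v w, Real.sqrt ε * nH1 v ≤ trinorm v w)
    (hc2 : ∀ v w, nuc v ≤ Cuc * trinorm v w)
    (htri1 : ∀ x y : X, nH1 (x + y) ≤ nH1 x + nH1 y)
    (htri2 : ∀ x y : X, nuc (x + y) ≤ nuc x + nuc y)
    (hπH1 : nH1 (πu - u) ≤ Cπ * h ^ (s - 1) * Ms)
    (hπuc : nuc (πu - u) ≤ Cπ * h ^ (s - 1) * Ms) :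
    ∃ C' > 0, nH1 (uh - u) ≤ C' * Ms ∧ nuc (uh - u) ≤ C' * Real.sqrt ε * Ms := by
  obtain ⟨hε0, hε1⟩ := hε
  have hsq : 0 < Real.sqrt ε := Real.sqrt_pos.mpr hε0
  have hsq1 : Real.sqrt ε ≤ 1 := by
    rw [show (1:ℝ) = Real.sqrt 1 by simp]
    exact Real.sqrt_le_sqrt hε1.le
  -- the coupling makes h^(s-1) = √ε
  have hh : h ^ (s - 1) = Real.sqrt ε := by
    rw [hcoupling, ← Real.rpow_mul hε0.le, Real.sqrt_eq_rpow]
    congr 1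
    have hne : 2 * s - 2 ≠ 0 := by nlinarith
    rw [div_mul_eq_mul_div, one_mul, div_eq_div_iff hne two_ne_zero]
    ring
  rw [hh] at hT hπH1 hπuc
  -- triple norm bound becomes 2C√ε Ms
  have hT' : trinorm (uh - πu) lamh ≤ 2 * C * Real.sqrt ε * Ms := by nlinarith
  -- H¹ bound on the discrete error
  have key1 : nH1 (uh - πu) ≤ 2 * C * Ms := by
    have h1 := hc1 (uh - πu) lamh
    have h2 : Real.sqrt ε * nH1 (uh - πu) ≤ Real.sqrt ε * (2 * C * Ms) := by
      calc Real.sqrt ε * nH1 (uh - πu) ≤ trinorm (uh - πu) lamh := h1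
        _ ≤ 2 * C * Real.sqrt ε * Ms := hT'
        _ = Real.sqrt ε * (2 * C * Ms) := by ring
    exact le_of_mul_le_mul_left h2 hsq
  -- uc bound on the discrete error
  have key2 : nuc (uh - πu) ≤ Cuc * (2 * C * Real.sqrt ε * Ms) :=
    le_trans (hc2 (uh - πu) lamh) (by nlinarith)
  have hsplit : uh - u = (uh - πu) + (πu - u) := by abel
  refine ⟨2 * C * (1 + Cuc) + Cπ, by positivity, ?_, ?_⟩
  · calc nH1 (uh - u) = nH1 ((uh - πu) + (πu - u)) := by rw [hsplit]
      _ ≤ nH1 (uh - πu) + nH1 (πu - u) := htri1 _ _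
      _ ≤ (2 * C * (1 + Cuc) + Cπ) * Ms := by
          nlinarith [mul_nonneg (mul_nonneg hCπ.le (sub_nonneg.mpr hsq1)) hMs,
            mul_nonneg (mul_nonneg hC.le hCuc.le) hMs]
  · calc nuc (uh - u) = nuc ((uh - πu) + (πu - u)) := by rw [hsplit]
      _ ≤ nuc (uh - πu) + nuc (πu - u) := htri2 _ _
      _ ≤ (2 * C * (1 + Cuc) + Cπ) * Real.sqrt ε * Ms := by
          nlinarith [mul_nonneg (mul_nonneg hC.le hsq.le) hMs]
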